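/- arXiv:2001.11726 — 2 statements merged into one kernel-verified Lean document; each statement's English description precedes it below -/
import Mathlib

section
/- Let Λ = ℤω₁ + ℤω₂ be a lattice in ℂ with fundamental parallelogram Π = {sω₁ + tω₂ | s, t ∈ [0,1)}, let p be an integer greater than 1, and let e : ℂ → ℤ be a discretely supported Λ-periodic function. Define d(z) = e(pz) − e(z). Then e and d are each nonzero at only finitely many points of Π, and ∑_{z ∈ Π} d(z) = (p² − 1)·∑_{z ∈ Π} e(z). -/
open Filter Function

/-- `d` is discretely supported: its support has no accumulation points in `ℂ`. -/
def DiscretelySupported (d : ℂ → ℤ) : Prop :=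
  ∀ z : ℂ, ¬ AccPt z (𝓟 (Function.support d))

/-- `d` is `Λ`-periodic. -/
def IsPeriodic (Λ : Set ℂ) (d : ℂ → ℤ) : Prop :=
  ∀ z : ℂ, ∀ l ∈ Λ, d (z + l) = d z

/-- **Degree computation.** Let `Λ = ℤω₁ + ℤω₂` be a lattice with fundamental
parallelogram `Par = {sω₁ + tω₂ | s, t ∈ [0,1)}`, `p > 1` an integer and `e : ℂ → ℤ`
discretely supported and `Λ`-periodic.  Set `d(z) = e(pz) - e(z)`.  Then `e` and `d`
are nonzero at only finitely many points of `Par` and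
`∑_{z ∈ Par} d(z) = (p² - 1) ∑_{z ∈ Par} e(z)`. -/
theorem degree_of_coboundary
    (ω₁ ω₂ : ℂ) (hω : LinearIndependent ℝ ![ω₁, ω₂])
    (Λ : Set ℂ) (hΛ : Λ = {z : ℂ | ∃ m n : ℤ, z = (m : ℂ) * ω₁ + (n : ℂ) * ω₂})
    (Par : Set ℂ)
    (hPar : Par = {z : ℂ | ∃ s t : ℝ, s ∈ Set.Ico (0 : ℝ) 1 ∧ t ∈ Set.Ico (0 : ℝ) 1 ∧
      z = (s : ℂ) * ω₁ + (t : ℂ) * ω₂})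
    (p : ℤ) (hp : 1 < p)
    (e : ℂ → ℤ) (he : DiscretelySupported e) (hper : IsPeriodic Λ e)
    (d : ℂ → ℤ) (hd : ∀ z : ℂ, d z = e ((p : ℂ) * z) - e z) :
    (Par ∩ Function.support e).Finite ∧ (Par ∩ Function.support d).Finite ∧
    ∑ᶠ z ∈ Par, d z = (p ^ 2 - 1) * ∑ᶠ z ∈ Par, e z := by
  classical
  -- coordinate system
  have hcard : Fintype.card (Fin 2) = Module.finrank ℝ ℂ := by
    simp [Complex.finrank_real_complex]
  let b : Module.Basis (Fin 2) ℝ ℂ := basisOfLinearIndependentOfCardEqFinrank hω hcard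
  have hb : ⇑b = ![ω₁, ω₂] := coe_basisOfLinearIndependentOfCardEqFinrank hω hcard
  have hb0 : b 0 = ω₁ := by rw [hb]; rfl
  have hb1 : b 1 = ω₂ := by rw [hb]; rfl
  set cs : ℂ → ℝ := fun z => b.repr z 0 with hcs
  set ct : ℂ → ℝ := fun z => b.repr z 1 with hct
  have hrep : ∀ s t : ℝ, cs ((s:ℂ) * ω₁ + (t:ℂ) * ω₂) = s ∧ ct ((s:ℂ) * ω₁ + (t:ℂ) * ω₂) = t := by
    intro s t
    have h : (s:ℂ) * ω₁ + (t:ℂ) * ω₂ = s • b 0 + t • b 1 := by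
      rw [hb0, hb1]; simp [Complex.real_smul]
    constructor <;>
    · show b.repr _ _ = _
      rw [h]
      simp only [map_add, map_smul, Module.Basis.repr_self, Finsupp.coe_add, Finsupp.coe_smul,
        Pi.add_apply, Pi.smul_apply, smul_eq_mul, Finsupp.single_apply]
      norm_num
  have hexp : ∀ z : ℂ, z = (cs z : ℂ) * ω₁ + (ct z : ℂ) * ω₂ := by
    intro z
    have h := b.sum_repr z
    rw [Fin.sum_univ_two, hb0, hb1] at h
    conv_lhs => rw [← h]
    simp [hcs, hct, Complex.real_smul]
  have hcadd : ∀ x y : ℂ, cs (x + y) = cs x + cs y := by intro x y; simp [hcs, map_add]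
  have hctadd : ∀ x y : ℂ, ct (x + y) = ct x + ct y := by intro x y; simp [hct, map_add]
  have hcsub : ∀ x y : ℂ, cs (x - y) = cs x - cs y := by intro x y; simp [hcs, map_sub]
  have hctsub : ∀ x y : ℂ, ct (x - y) = ct x - ct y := by intro x y; simp [hct, map_sub]
  have hcsmul : ∀ (r : ℝ) (z : ℂ), cs ((r:ℂ) * z) = r * cs z := by
    intro r z
    show b.repr _ _ = _
    rw [← Complex.real_smul, map_smul]
    simp [hcs]
  have hctsmul : ∀ (r : ℝ) (z : ℂ), ct ((r:ℂ) * z) = r * ct z := by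
    intro r z
    show b.repr _ _ = _
    rw [← Complex.real_smul, map_smul]
    simp [hct]
  have hpcast : ((p:ℤ):ℂ) = (((p:ℝ)):ℂ) := by push_cast; ring
  have hcsp : ∀ z : ℂ, cs ((p:ℂ) * z) = (p:ℝ) * cs z := by
    intro z; rw [hpcast]; exact hcsmul _ _
  have hctp : ∀ z : ℂ, ct ((p:ℂ) * z) = (p:ℝ) * ct z := by
    intro z; rw [hpcast]; exact hctsmul _ _
  have hcslat : ∀ m n : ℤ, cs ((m:ℂ) * ω₁ + (n:ℂ) * ω₂) = m := by
    intro m n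
    have h := (hrep (m:ℝ) (n:ℝ)).1
    push_cast at h ⊢
    exact h
  have hctlat : ∀ m n : ℤ, ct ((m:ℂ) * ω₁ + (n:ℂ) * ω₂) = n := by
    intro m n
    have h := (hrep (m:ℝ) (n:ℝ)).2
    push_cast at h ⊢
    exact h
  have hParmem : ∀ z : ℂ, z ∈ Par ↔ (cs z ∈ Set.Ico (0:ℝ) 1 ∧ ct z ∈ Set.Ico (0:ℝ) 1) := by
    intro z
    rw [hPar]
    constructor
    · rintro ⟨s, t, hs, ht, rfl⟩
      rw [(hrep s t).1, (hrep s t).2]; exact ⟨hs, ht⟩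
    · rintro ⟨h1, h2⟩
      exact ⟨cs z, ct z, h1, h2, hexp z⟩
  have hlat : ∀ (m n : ℤ) (x : ℂ), e (x + ((m:ℂ) * ω₁ + (n:ℂ) * ω₂)) = e x := by
    intro m n x
    exact hper x _ (by rw [hΛ]; exact ⟨m, n, rfl⟩)
  -- boundedness and finiteness
  have hPbdd : Bornology.IsBounded Par := by
    refine Metric.isBounded_closedBall (x := (0:ℂ)) (r := ‖ω₁‖ + ‖ω₂‖) |>.subset ?_
    rw [hPar]
    rintro z ⟨s, t, hs, ht, rfl⟩
    simp only [Metric.mem_closedBall, dist_zero_right]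
    have h1 : ‖(s:ℂ) * ω₁‖ ≤ ‖ω₁‖ := by
      rw [norm_mul, Complex.norm_real, Real.norm_eq_abs]
      have hs1 : |s| ≤ 1 := by rw [abs_le]; constructor <;> [linarith [hs.1]; linarith [hs.2]]
      nlinarith [norm_nonneg ω₁]
    have h2 : ‖(t:ℂ) * ω₂‖ ≤ ‖ω₂‖ := by
      rw [norm_mul, Complex.norm_real, Real.norm_eq_abs]
      have ht1 : |t| ≤ 1 := by rw [abs_le]; constructor <;> [linarith [ht.1]; linarith [ht.2]]
      nlinarith [norm_nonneg ω₂]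
    calc ‖(s:ℂ) * ω₁ + (t:ℂ) * ω₂‖ ≤ ‖(s:ℂ) * ω₁‖ + ‖(t:ℂ) * ω₂‖ := norm_add_le _ _
    _ ≤ ‖ω₁‖ + ‖ω₂‖ := add_le_add h1 h2
  have hfin : ∀ K : Set ℂ, Bornology.IsBounded K → (K ∩ Function.support e).Finite := by
    intro K hK
    by_contra hcon
    obtain ⟨R, hR⟩ := hK.subset_closedBall 0
    have hinf : (K ∩ Function.support e).Infinite := hcon
    obtain ⟨x, -, hx⟩ := hinf.exists_accPt_of_subset_isCompact
      (isCompact_closedBall (0:ℂ) R) (Set.inter_subset_left.trans hR)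
    exact he x (hx.mono (principal_mono.2 Set.inter_subset_right))
  have hEfin : (Par ∩ Function.support e).Finite := hfin Par hPbdd
  have hp0 : (0:ℤ) < p := by linarith
  have hpC : (p:ℂ) ≠ 0 := by exact_mod_cast hp0.ne'
  have hpR : (0:ℝ) < (p:ℝ) := by exact_mod_cast hp0
  set g : ℂ → ℤ := fun z => e ((p:ℂ) * z) with hg
  have hGfin : (Par ∩ Function.support g).Finite := by
    obtain ⟨R, hR⟩ := hPbdd.subset_closedBall 0
    have hinj : Function.Injective (fun z : ℂ => (p:ℂ) * z) := fun a b h =>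
      mul_left_cancel₀ hpC h
    have h1 : ((Metric.closedBall (0:ℂ) (‖(p:ℂ)‖ * R)) ∩ Function.support e).Finite :=
      hfin _ Metric.isBounded_closedBall
    have h2 : (Par ∩ Function.support g) ⊆
        (fun z : ℂ => (p:ℂ) * z) ⁻¹'
          ((Metric.closedBall (0:ℂ) (‖(p:ℂ)‖ * R)) ∩ Function.support e) := by
      rintro z ⟨hz1, hz2⟩
      refine ⟨?_, hz2⟩
      have hzb := hR hz1
      simp only [Metric.mem_closedBall, dist_zero_right] at hzb ⊢
      rw [norm_mul]
      exact mul_le_mul_of_nonneg_left hzb (norm_nonneg _)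
    exact ((h1.preimage hinj.injOn).subset h2)
  have hDfin : (Par ∩ Function.support d).Finite := by
    refine (hGfin.union hEfin).subset ?_
    rintro z ⟨hz1, hz2⟩
    rw [Function.mem_support, hd z] at hz2
    by_cases h : e ((p:ℂ) * z) = 0
    · right
      refine ⟨hz1, fun h0 => hz2 ?_⟩
      rw [h, h0]; ring
    · left; exact ⟨hz1, h⟩
  refine ⟨hEfin, hDfin, ?_⟩
  -- finite sets
  set E : Finset ℂ := hEfin.toFinset with hE
  set G : Finset ℂ := hGfin.toFinset with hG
  set D : Finset ℂ := hDfin.toFinset with hD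
  set U : Finset ℂ := D ∪ G ∪ E with hU
  have hUsub : ↑U ⊆ Par := by
    intro z hz
    simp only [hU, Finset.coe_union, Set.mem_union, Finset.mem_coe, hD, hG, hE,
      Set.Finite.mem_toFinset] at hz
    rcases hz with (h | h) | h
    · exact h.1
    · exact h.1
    · exact h.1
  have hsum_d : ∑ᶠ z ∈ Par, d z = ∑ z ∈ U, d z := by
    refine finsum_mem_eq_sum_of_subset _ ?_ hUsub
    intro z hz
    have hzD : z ∈ D := hDfin.mem_toFinset.2 hz
    exact Finset.mem_union_left _ (Finset.mem_union_left _ hzD)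
  have hsum_e : ∑ᶠ z ∈ Par, e z = ∑ z ∈ E, e z := finsum_mem_eq_sum _ hEfin
  have hEU : ∑ z ∈ U, e z = ∑ z ∈ E, e z := by
    refine (Finset.sum_subset Finset.subset_union_right ?_).symm
    intro z hzU hzE
    by_contra h
    exact hzE (hEfin.mem_toFinset.2 ⟨hUsub hzU, h⟩)
  have hGU : ∑ z ∈ U, g z = ∑ z ∈ G, g z := by
    refine (Finset.sum_subset (Finset.subset_union_right.trans Finset.subset_union_left) ?_).symm
    intro z hzU hzG
    by_contra h
    exact hzG (hGfin.mem_toFinset.2 ⟨hUsub hzU, h⟩)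
  -- the key bijection
  set box : Finset (ℤ × ℤ) := Finset.Ico 0 p ×ˢ Finset.Ico 0 p with hbox
  have hbij : ∑ z ∈ G, g z = ∑ x ∈ box ×ˢ E, e x.2 := by
    refine Finset.sum_bij' (fun z _ => ((⌊(p:ℝ) * cs z⌋, ⌊(p:ℝ) * ct z⌋),
        (p:ℂ) * z - ((⌊(p:ℝ) * cs z⌋ : ℂ) * ω₁ + (⌊(p:ℝ) * ct z⌋ : ℂ) * ω₂)))
      (fun x _ => (x.2 + ((x.1.1 : ℂ) * ω₁ + (x.1.2 : ℂ) * ω₂)) / (p:ℂ)) ?_ ?_ ?_ ?_ ?_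
    · -- maps into box ×ˢ E
      intro z hz
      rw [hG, Set.Finite.mem_toFinset] at hz
      obtain ⟨hzP, hzS⟩ := hz
      rw [hParmem] at hzP
      obtain ⟨⟨ha0, ha1⟩, hb0', hb1'⟩ := hzP
      have hk1l : (0:ℤ) ≤ ⌊(p:ℝ) * cs z⌋ := Int.floor_nonneg.2 (mul_nonneg hpR.le ha0)
      have hk1u : ⌊(p:ℝ) * cs z⌋ < p := Int.floor_lt.2 (by push_cast; nlinarith)
      have hk2l : (0:ℤ) ≤ ⌊(p:ℝ) * ct z⌋ := Int.floor_nonneg.2 (mul_nonneg hpR.le hb0')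
      have hk2u : ⌊(p:ℝ) * ct z⌋ < p := Int.floor_lt.2 (by push_cast; nlinarith)
      have hwc : cs ((p:ℂ) * z - ((⌊(p:ℝ) * cs z⌋ : ℂ) * ω₁ + (⌊(p:ℝ) * ct z⌋ : ℂ) * ω₂))
          = (p:ℝ) * cs z - ⌊(p:ℝ) * cs z⌋ := by
        rw [hcsub, hcsp, hcslat]
      have hwt : ct ((p:ℂ) * z - ((⌊(p:ℝ) * cs z⌋ : ℂ) * ω₁ + (⌊(p:ℝ) * ct z⌋ : ℂ) * ω₂))
          = (p:ℝ) * ct z - ⌊(p:ℝ) * ct z⌋ := by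
        rw [hctsub, hctp, hctlat]
      have hwP : ((p:ℂ) * z - ((⌊(p:ℝ) * cs z⌋ : ℂ) * ω₁ + (⌊(p:ℝ) * ct z⌋ : ℂ) * ω₂)) ∈ Par := by
        rw [hParmem, hwc, hwt]
        refine ⟨⟨?_, ?_⟩, ?_, ?_⟩
        · linarith [Int.floor_le ((p:ℝ) * cs z)]
        · linarith [Int.lt_floor_add_one ((p:ℝ) * cs z)]
        · linarith [Int.floor_le ((p:ℝ) * ct z)]
        · linarith [Int.lt_floor_add_one ((p:ℝ) * ct z)]
      have hval : e ((p:ℂ) * z)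
          = e ((p:ℂ) * z - ((⌊(p:ℝ) * cs z⌋ : ℂ) * ω₁ + (⌊(p:ℝ) * ct z⌋ : ℂ) * ω₂)) := by
        conv_lhs => rw [show (p:ℂ) * z
          = ((p:ℂ) * z - ((⌊(p:ℝ) * cs z⌋ : ℂ) * ω₁ + (⌊(p:ℝ) * ct z⌋ : ℂ) * ω₂))
            + ((⌊(p:ℝ) * cs z⌋ : ℂ) * ω₁ + (⌊(p:ℝ) * ct z⌋ : ℂ) * ω₂) by ring]
        exact hlat _ _ _
      have hwS : e ((p:ℂ) * z - ((⌊(p:ℝ) * cs z⌋ : ℂ) * ω₁ + (⌊(p:ℝ) * ct z⌋ : ℂ) * ω₂)) ≠ 0 :=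
        fun h0 => hzS (hval.trans h0)
      simp only [hbox, Finset.mem_product, Finset.mem_Ico, hE, Set.Finite.mem_toFinset]
      exact ⟨⟨⟨hk1l, hk1u⟩, hk2l, hk2u⟩, hwP, hwS⟩
    · -- reverse maps into G
      intro x hx
      obtain ⟨⟨k₁, k₂⟩, w⟩ := x
      simp only [hbox, Finset.mem_product, Finset.mem_Ico, hE, Set.Finite.mem_toFinset] at hx
      obtain ⟨⟨⟨hk1l, hk1u⟩, hk2l, hk2u⟩, hwP, hwS⟩ := hx
      dsimp only
      have hpz : (p:ℂ) * ((w + ((k₁:ℂ) * ω₁ + (k₂:ℂ) * ω₂)) / (p:ℂ))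
          = w + ((k₁:ℂ) * ω₁ + (k₂:ℂ) * ω₂) := by
        rw [mul_comm, div_mul_cancel₀ _ hpC]
      rw [hParmem] at hwP
      obtain ⟨⟨hw0, hw1⟩, hw0', hw1'⟩ := hwP
      have hzc : (p:ℝ) * cs ((w + ((k₁:ℂ) * ω₁ + (k₂:ℂ) * ω₂)) / (p:ℂ)) = cs w + k₁ := by
        rw [← hcsp, hpz, hcadd, hcslat]
      have hzt : (p:ℝ) * ct ((w + ((k₁:ℂ) * ω₁ + (k₂:ℂ) * ω₂)) / (p:ℂ)) = ct w + k₂ := by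
        rw [← hctp, hpz, hctadd, hctlat]
      have hk1R : (k₁:ℝ) + 1 ≤ (p:ℝ) := by exact_mod_cast hk1u
      have hk2R : (k₂:ℝ) + 1 ≤ (p:ℝ) := by exact_mod_cast hk2u
      have hk1R0 : (0:ℝ) ≤ (k₁:ℝ) := by exact_mod_cast hk1l
      have hk2R0 : (0:ℝ) ≤ (k₂:ℝ) := by exact_mod_cast hk2l
      rw [hG, Set.Finite.mem_toFinset]
      constructor
      · rw [hParmem]
        constructor
        · constructor
          · nlinarith [hzc]
          · nlinarith [hzc]
        · constructor
          · nlinarith [hzt]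
          · nlinarith [hzt]
      · show g _ ≠ 0
        have : g ((w + ((k₁:ℂ) * ω₁ + (k₂:ℂ) * ω₂)) / (p:ℂ)) = e w := by
          rw [hg]
          dsimp only
          rw [hpz, ← add_assoc]
          rw [show w + (k₁:ℂ) * ω₁ + (k₂:ℂ) * ω₂ = w + ((k₁:ℂ) * ω₁ + (k₂:ℂ) * ω₂) by ring]
          exact hlat _ _ _
        rw [this]
        exact hwS
    · -- left inverse
      intro z hz
      dsimp only
      rw [div_eq_iff hpC]
      ring
    · -- right inverse
      intro x hx
      obtain ⟨⟨k₁, k₂⟩, w⟩ := x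
      simp only [hbox, Finset.mem_product, Finset.mem_Ico, hE, Set.Finite.mem_toFinset] at hx
      obtain ⟨⟨⟨hk1l, hk1u⟩, hk2l, hk2u⟩, hwP, hwS⟩ := hx
      dsimp only
      have hpz : (p:ℂ) * ((w + ((k₁:ℂ) * ω₁ + (k₂:ℂ) * ω₂)) / (p:ℂ))
          = w + ((k₁:ℂ) * ω₁ + (k₂:ℂ) * ω₂) := by
        rw [mul_comm, div_mul_cancel₀ _ hpC]
      rw [hParmem] at hwP
      obtain ⟨⟨hw0, hw1⟩, hw0', hw1'⟩ := hwP
      have hzc : (p:ℝ) * cs ((w + ((k₁:ℂ) * ω₁ + (k₂:ℂ) * ω₂)) / (p:ℂ)) = cs w + k₁ := by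
        rw [← hcsp, hpz, hcadd, hcslat]
      have hzt : (p:ℝ) * ct ((w + ((k₁:ℂ) * ω₁ + (k₂:ℂ) * ω₂)) / (p:ℂ)) = ct w + k₂ := by
        rw [← hctp, hpz, hctadd, hctlat]
      have hfl1 : ⌊(p:ℝ) * cs ((w + ((k₁:ℂ) * ω₁ + (k₂:ℂ) * ω₂)) / (p:ℂ))⌋ = k₁ := by
        rw [hzc, Int.floor_add_intCast, Int.floor_eq_zero_iff.2 ⟨hw0, hw1⟩, zero_add]
      have hfl2 : ⌊(p:ℝ) * ct ((w + ((k₁:ℂ) * ω₁ + (k₂:ℂ) * ω₂)) / (p:ℂ))⌋ = k₂ := by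
        rw [hzt, Int.floor_add_intCast, Int.floor_eq_zero_iff.2 ⟨hw0', hw1'⟩, zero_add]
      simp only [hfl1, hfl2]
      rw [hpz]
      have hww : w + ((k₁:ℂ) * ω₁ + (k₂:ℂ) * ω₂) - ((k₁:ℂ) * ω₁ + (k₂:ℂ) * ω₂) = w := by ring
      rw [hww]
    · -- values agree
      intro z hz
      dsimp only
      show g z = _
      rw [hg]
      dsimp only
      conv_lhs => rw [show (p:ℂ) * z
        = ((p:ℂ) * z - ((⌊(p:ℝ) * cs z⌋ : ℂ) * ω₁ + (⌊(p:ℝ) * ct z⌋ : ℂ) * ω₂))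
          + ((⌊(p:ℝ) * cs z⌋ : ℂ) * ω₁ + (⌊(p:ℝ) * ct z⌋ : ℂ) * ω₂) by ring]
      exact hlat _ _ _
  have hboxcard : (box.card : ℤ) = p ^ 2 := by
    rw [hbox, Finset.card_product, Int.card_Ico, sub_zero]
    push_cast [Int.toNat_of_nonneg hp0.le]
    ring
  have hprod : ∑ x ∈ box ×ˢ E, e x.2 = p ^ 2 * ∑ w ∈ E, e w := by
    rw [Finset.sum_product]
    have hconst : ∀ x ∈ box, (∑ y ∈ E, e ((x, y).2)) = ∑ w ∈ E, e w := fun x _ => rfl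
    rw [Finset.sum_congr rfl hconst, Finset.sum_const, nsmul_eq_mul, hboxcard]
  rw [hsum_d, hsum_e]
  calc ∑ z ∈ U, d z
      = ∑ z ∈ U, (g z - e z) := Finset.sum_congr rfl (fun z _ => by rw [hd z])
    _ = ∑ z ∈ U, g z - ∑ z ∈ U, e z := Finset.sum_sub_distrib _ _
    _ = ∑ z ∈ G, g z - ∑ z ∈ E, e z := by rw [hGU, hEU]
    _ = p ^ 2 * ∑ z ∈ E, e z - ∑ z ∈ E, e z := by rw [hbij, hprod]
    _ = (p ^ 2 - 1) * ∑ z ∈ E, e z := by ring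
end

section
/- Let Λ = ℤω₁ + ℤω₂ be a lattice in ℂ with fundamental parallelogram Π = {sω₁ + tω₂ | s, t ∈ [0,1)}, let p be an integer greater than 1, and let e : ℂ → ℤ be a discretely supported Λ-periodic function with ∑_{z ∈ Π} e(z) = 0. Define d(z) = e(pz) − e(z). Then ∑_{z ∈ Π} z·d(z) = (p − 1)·∑_{z ∈ Π} z·e(z). -/
open Filter Function

/-- **Abel sum computation.** Let `Λ = ℤω₁ + ℤω₂` be a lattice with fundamental
parallelogram `Par = {sω₁ + tω₂ | s, t ∈ [0,1)}`, `p > 1` an integer and `e : ℂ → ℤ`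
discretely supported and `Λ`-periodic with `∑_{z ∈ Par} e(z) = 0`.  Set
`d(z) = e(pz) - e(z)`.  Then `∑_{z ∈ Par} z·d(z) = (p - 1) ∑_{z ∈ Par} z·e(z)`. -/
theorem abel_sum_of_coboundary
    (ω₁ ω₂ : ℂ) (hω : LinearIndependent ℝ ![ω₁, ω₂])
    (Λ : Set ℂ) (hΛ : Λ = {z : ℂ | ∃ m n : ℤ, z = (m : ℂ) * ω₁ + (n : ℂ) * ω₂})
    (Par : Set ℂ)
    (hPar : Par = {z : ℂ | ∃ s t : ℝ, s ∈ Set.Ico (0 : ℝ) 1 ∧ t ∈ Set.Ico (0 : ℝ) 1 ∧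
      z = (s : ℂ) * ω₁ + (t : ℂ) * ω₂})
    (p : ℤ) (hp : 1 < p)
    (e : ℂ → ℤ) (he : DiscretelySupported e) (hper : IsPeriodic Λ e)
    (hdeg : ∑ᶠ z ∈ Par, e z = 0)
    (d : ℂ → ℤ) (hd : ∀ z : ℂ, d z = e ((p : ℂ) * z) - e z) :
    ∑ᶠ z ∈ Par, z * (d z : ℂ) = ((p : ℂ) - 1) * ∑ᶠ z ∈ Par, z * (e z : ℂ) := by
  classical
  -- basic facts about p
  have hpR : (0 : ℝ) < (p : ℝ) := by exact_mod_cast lt_trans zero_lt_one hp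
  have hpC : (p : ℂ) ≠ 0 := by
    exact_mod_cast (by omega : p ≠ 0)
  -- coordinates with respect to the basis (ω₁, ω₂)
  have h2 : Fintype.card (Fin 2) = Module.finrank ℝ ℂ := by
    simp [Complex.finrank_real_complex]
  let B : Module.Basis (Fin 2) ℝ ℂ := basisOfLinearIndependentOfCardEqFinrank hω h2
  have hB : ∀ i, B i = ![ω₁, ω₂] i := fun i => by
    rw [show B = _ from rfl, coe_basisOfLinearIndependentOfCardEqFinrank]
  set c : ℂ → Fin 2 → ℝ := fun z i => B.repr z i with hc_def
  have hrepr : ∀ z : ℂ, ((c z 0 : ℝ) : ℂ) * ω₁ + ((c z 1 : ℝ) : ℂ) * ω₂ = z := by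
    intro z
    have := B.sum_repr z
    rw [Fin.sum_univ_two] at this
    simpa [hB 0, hB 1, Complex.real_smul] using this
  have hcadd : ∀ a b : ℂ, ∀ i, c (a + b) i = c a i + c b i := by
    intro a b i; simp [hc_def, map_add]
  have hcsmul : ∀ (r : ℝ) (a : ℂ) (i : Fin 2), c ((r : ℂ) * a) i = r * c a i := by
    intro r a i
    rw [← Complex.real_smul]
    simp only [hc_def, map_smul]
    simp
  have hb1 : ∀ i : Fin 2, c ω₁ i = if (0 : Fin 2) = i then 1 else 0 := by
    intro i
    have h : ω₁ = B 0 := by rw [hB 0]; simp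
    rw [h]
    simp [hc_def, Module.Basis.repr_self, Finsupp.single_apply]
  have hb2 : ∀ i : Fin 2, c ω₂ i = if (1 : Fin 2) = i then 1 else 0 := by
    intro i
    have h : ω₂ = B 1 := by rw [hB 1]; simp
    rw [h]
    simp [hc_def, Module.Basis.repr_self, Finsupp.single_apply]
  have hc : ∀ s t : ℝ, c ((s : ℂ) * ω₁ + (t : ℂ) * ω₂) 0 = s ∧
      c ((s : ℂ) * ω₁ + (t : ℂ) * ω₂) 1 = t := by
    intro s t
    constructor <;> rw [hcadd, hcsmul, hcsmul] <;> simp [hb1, hb2]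
  -- membership criteria
  have hParMem : ∀ z : ℂ, z ∈ Par ↔ (0 ≤ c z 0 ∧ c z 0 < 1 ∧ 0 ≤ c z 1 ∧ c z 1 < 1) := by
    intro z
    rw [hPar]
    constructor
    · rintro ⟨s, t, hs, ht, rfl⟩
      obtain ⟨h0, h1⟩ := hc s t
      rw [h0, h1]
      exact ⟨hs.1, hs.2, ht.1, ht.2⟩
    · rintro ⟨h0, h1, h2', h3⟩
      exact ⟨c z 0, c z 1, ⟨h0, h1⟩, ⟨h2', h3⟩, (hrepr z).symm⟩
  have hper' : ∀ (z : ℂ) (m n : ℤ), e (z + ((m : ℂ) * ω₁ + (n : ℂ) * ω₂)) = e z := by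
    intro z m n
    exact hper z _ (by rw [hΛ]; exact ⟨m, n, rfl⟩)
  -- the canonical decomposition into fractional and integral parts
  have hdecomp : ∀ z : ℂ,
      z = ((Int.fract (c z 0) : ℝ) : ℂ) * ω₁ + ((Int.fract (c z 1) : ℝ) : ℂ) * ω₂ +
        (((⌊c z 0⌋ : ℤ) : ℂ) * ω₁ + ((⌊c z 1⌋ : ℤ) : ℂ) * ω₂) := by
    intro z
    conv_lhs => rw [← hrepr z]
    simp only [Int.fract]
    push_cast
    ring
  have heρ : ∀ y : ℂ,
      e (((Int.fract (c y 0) : ℝ) : ℂ) * ω₁ + ((Int.fract (c y 1) : ℝ) : ℂ) * ω₂) = e y := by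
    intro y
    conv_rhs => rw [hdecomp y]
    rw [hper']
  -- finiteness
  have hfinite : ∀ r : ℝ, ({z : ℂ | ‖z‖ ≤ r} ∩ support e).Finite := by
    intro r
    by_contra hfin
    have hb : {z : ℂ | ‖z‖ ≤ r} ⊆ Metric.closedBall 0 r := by
      intro z hz
      simpa [Metric.mem_closedBall, Complex.dist_eq] using hz
    obtain ⟨x, -, hx⟩ := Set.Infinite.exists_accPt_of_subset_isCompact hfin
      (isCompact_closedBall (0 : ℂ) r) (fun z hz => hb hz.1)
    exact he x (hx.mono (principal_mono.2 Set.inter_subset_right))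
  set R : ℝ := ‖ω₁‖ + ‖ω₂‖ with hR
  have hbound : ∀ z ∈ Par, ‖z‖ ≤ R := by
    intro z hz
    rw [hPar] at hz
    obtain ⟨s, t, hs, ht, rfl⟩ := hz
    calc ‖(s : ℂ) * ω₁ + (t : ℂ) * ω₂‖
        ≤ ‖(s : ℂ) * ω₁‖ + ‖(t : ℂ) * ω₂‖ := norm_add_le _ _
      _ = |s| * ‖ω₁‖ + |t| * ‖ω₂‖ := by
          rw [norm_mul, norm_mul, Complex.norm_real, Complex.norm_real, Real.norm_eq_abs, Real.norm_eq_abs]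
      _ ≤ 1 * ‖ω₁‖ + 1 * ‖ω₂‖ := by
          have h1 : |s| ≤ 1 := by rw [abs_of_nonneg hs.1]; exact le_of_lt hs.2
          have h2 : |t| ≤ 1 := by rw [abs_of_nonneg ht.1]; exact le_of_lt ht.2
          have h3 := mul_le_mul_of_nonneg_right h1 (norm_nonneg ω₁)
          have h4 := mul_le_mul_of_nonneg_right h2 (norm_nonneg ω₂)
          linarith
      _ = R := by rw [hR]; ring
  have hTfin : (Par ∩ support e).Finite :=
    (hfinite R).subset (fun z hz => ⟨hbound z hz.1, hz.2⟩)
  set g : ℂ → ℤ := fun z => e ((p : ℂ) * z) with hg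
  have hUfin : (Par ∩ support g).Finite := by
    have h1 : ((fun z : ℂ => (p : ℂ) * z) ⁻¹'
        ({z : ℂ | ‖z‖ ≤ (p : ℝ) * R} ∩ support e)).Finite :=
      Set.Finite.preimage (fun a _ b _ hab => mul_left_cancel₀ hpC hab) (hfinite _)
    apply h1.subset
    intro z hz
    refine ⟨?_, hz.2⟩
    show ‖(p : ℂ) * z‖ ≤ (p : ℝ) * R
    rw [norm_mul]
    have : ‖((p : ℂ))‖ = (p : ℝ) := by
      rw [show ((p : ℂ)) = (((p : ℝ) : ℂ)) by push_cast; rfl, Complex.norm_real, Real.norm_eq_abs,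
        abs_of_pos hpR]
    rw [this]
    exact mul_le_mul_of_nonneg_left (hbound z hz.1) (le_of_lt hpR)
  set T : Finset ℂ := hTfin.toFinset with hT
  set U : Finset ℂ := hUfin.toFinset with hUdef
  have hTmem : ∀ z : ℂ, z ∈ T ↔ z ∈ Par ∧ e z ≠ 0 := by
    intro z; rw [hT, Set.Finite.mem_toFinset]; rfl
  have hUmem : ∀ z : ℂ, z ∈ U ↔ z ∈ Par ∧ e ((p : ℂ) * z) ≠ 0 := by
    intro z; rw [hUdef, Set.Finite.mem_toFinset]; rfl
  have hTsub : ↑T ⊆ Par := fun z hz => ((hTmem z).1 hz).1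
  have hUsub : ↑U ⊆ Par := fun z hz => ((hUmem z).1 hz).1
  -- degree zero
  have hE0 : ∑ w ∈ T, (e w : ℂ) = 0 := by
    have h1 : ∑ᶠ z ∈ Par, e z = ∑ w ∈ T, e w :=
      finsum_mem_eq_sum_of_subset e (fun z hz => (hTmem z).2 ⟨hz.1, hz.2⟩) hTsub
    rw [hdeg] at h1
    rw [← Int.cast_sum, ← h1, Int.cast_zero]
  set S : ℂ := ∑ w ∈ T, w * (e w : ℂ) with hSdef
  have hRHSsum : ∑ᶠ z ∈ Par, z * (e z : ℂ) = S := by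
    refine finsum_mem_eq_sum_of_subset _ (fun z hz => (hTmem z).2 ⟨hz.1, fun h0 => ?_⟩) hTsub
    have h5 := hz.2
    simp only [Function.mem_support] at h5
    exact h5 (by simp [h0])
  -- coordinates of p*z and of translates
  have hmulc : ∀ (z : ℂ) (i : Fin 2), c ((p : ℂ) * z) i = (p : ℝ) * c z i := by
    intro z i
    rw [show ((p : ℂ)) = (((p : ℝ) : ℂ)) by push_cast; rfl, hcsmul]
  have hcl : ∀ (w : ℂ) (m n : ℤ),
      c (w + ((m : ℂ) * ω₁ + (n : ℂ) * ω₂)) 0 = c w 0 + m ∧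
      c (w + ((m : ℂ) * ω₁ + (n : ℂ) * ω₂)) 1 = c w 1 + n := by
    intro w m n
    have e1 : (m : ℂ) * ω₁ + (n : ℂ) * ω₂ = ((m : ℝ) : ℂ) * ω₁ + ((n : ℝ) : ℂ) * ω₂ := by
      push_cast; ring
    constructor
    · rw [hcadd, e1, (hc _ _).1]
    · rw [hcadd, e1, (hc _ _).2]
  set V : Finset ((ℤ × ℤ) × ℂ) := (Finset.Ico (0:ℤ) p ×ˢ Finset.Ico (0:ℤ) p) ×ˢ T with hV
  set F : (ℤ × ℤ) × ℂ → ℂ := fun v =>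
    (p : ℂ)⁻¹ * (v.2 + ((v.1.1 : ℂ) * ω₁ + (v.1.2 : ℂ) * ω₂)) * (e v.2 : ℂ) with hF
  have hUV : ∑ z ∈ U, z * (g z : ℂ) = ∑ v ∈ V, F v := by
    refine Finset.sum_bij'
      (fun z _ => ((⌊c ((p:ℂ)*z) 0⌋, ⌊c ((p:ℂ)*z) 1⌋),
        ((Int.fract (c ((p:ℂ)*z) 0) : ℝ) : ℂ) * ω₁ +
          ((Int.fract (c ((p:ℂ)*z) 1) : ℝ) : ℂ) * ω₂))
      (fun v _ => (p : ℂ)⁻¹ * (v.2 + ((v.1.1 : ℂ) * ω₁ + (v.1.2 : ℂ) * ω₂)))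
      ?_ ?_ ?_ ?_ ?_
    · -- hi : i maps U into V
      intro z hz
      obtain ⟨hzP, hze⟩ := (hUmem z).1 hz
      obtain ⟨h0, h1, h2', h3⟩ := (hParMem z).1 hzP
      simp only [hV, Finset.mem_product, Finset.mem_Ico]
      refine ⟨⟨⟨?_, ?_⟩, ?_, ?_⟩, ?_⟩
      · exact Int.floor_nonneg.mpr (by rw [hmulc]; positivity)
      · rw [Int.floor_lt, hmulc]
        nlinarith
      · exact Int.floor_nonneg.mpr (by rw [hmulc]; positivity)
      · rw [Int.floor_lt, hmulc]
        nlinarith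
      · refine (hTmem _).2 ⟨(hParMem _).2 ?_, ?_⟩
        · rw [(hc _ _).1, (hc _ _).2]
          exact ⟨Int.fract_nonneg _, Int.fract_lt_one _, Int.fract_nonneg _,
            Int.fract_lt_one _⟩
        · rw [heρ ((p:ℂ)*z)]
          exact hze
    · -- hj : j maps V into U
      rintro ⟨⟨m, n⟩, w⟩ hv
      simp only [hV, Finset.mem_product, Finset.mem_Ico] at hv
      obtain ⟨⟨⟨hm0, hm1⟩, hn0, hn1⟩, hw⟩ := hv
      obtain ⟨hwP, hwe⟩ := (hTmem w).1 hw
      obtain ⟨h0, h1, h2', h3⟩ := (hParMem w).1 hwP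
      have hinv : ((p : ℂ))⁻¹ = (((p : ℝ)⁻¹ : ℝ) : ℂ) := by push_cast; rfl
      have hco0 : c ((p:ℂ)⁻¹ * (w + ((m : ℂ) * ω₁ + (n : ℂ) * ω₂))) 0
          = (p : ℝ)⁻¹ * (c w 0 + m) := by rw [hinv, hcsmul, (hcl w m n).1]
      have hco1 : c ((p:ℂ)⁻¹ * (w + ((m : ℂ) * ω₁ + (n : ℂ) * ω₂))) 1
          = (p : ℝ)⁻¹ * (c w 1 + n) := by rw [hinv, hcsmul, (hcl w m n).2]
      have hmR0 : (0:ℝ) ≤ (m:ℝ) := by exact_mod_cast hm0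
      have hmR1 : (m:ℝ) ≤ (p:ℝ) - 1 := by
        have : m ≤ p - 1 := by omega
        exact_mod_cast this
      have hnR0 : (0:ℝ) ≤ (n:ℝ) := by exact_mod_cast hn0
      have hnR1 : (n:ℝ) ≤ (p:ℝ) - 1 := by
        have : n ≤ p - 1 := by omega
        exact_mod_cast this
      have hpinv : (0:ℝ) < (p:ℝ)⁻¹ := inv_pos.mpr hpR
      refine (hUmem _).2 ⟨(hParMem _).2 ?_, ?_⟩
      · rw [hco0, hco1]
        refine ⟨by positivity, ?_, by positivity, ?_⟩
        · have hlt : c w 0 + (m:ℝ) < (p:ℝ) := by linarith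
          calc (p : ℝ)⁻¹ * (c w 0 + m) < (p : ℝ)⁻¹ * (p:ℝ) :=
                mul_lt_mul_of_pos_left hlt hpinv
            _ = 1 := inv_mul_cancel₀ (ne_of_gt hpR)
        · have hlt : c w 1 + (n:ℝ) < (p:ℝ) := by linarith
          calc (p : ℝ)⁻¹ * (c w 1 + n) < (p : ℝ)⁻¹ * (p:ℝ) :=
                mul_lt_mul_of_pos_left hlt hpinv
            _ = 1 := inv_mul_cancel₀ (ne_of_gt hpR)
      · rw [mul_inv_cancel_left₀ hpC, hper' w m n]
        exact hwe
    · -- left inverse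
      intro z hz
      show (p : ℂ)⁻¹ * ((((Int.fract (c ((p:ℂ)*z) 0) : ℝ) : ℂ) * ω₁ +
          ((Int.fract (c ((p:ℂ)*z) 1) : ℝ) : ℂ) * ω₂) +
          (((⌊c ((p:ℂ)*z) 0⌋ : ℤ) : ℂ) * ω₁ + ((⌊c ((p:ℂ)*z) 1⌋ : ℤ) : ℂ) * ω₂)) = z
      rw [← hdecomp ((p:ℂ)*z), inv_mul_cancel_left₀ hpC]
    · -- right inverse
      rintro ⟨⟨m, n⟩, w⟩ hv
      simp only [hV, Finset.mem_product, Finset.mem_Ico] at hv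
      obtain ⟨⟨⟨hm0, hm1⟩, hn0, hn1⟩, hw⟩ := hv
      obtain ⟨hwP, hwe⟩ := (hTmem w).1 hw
      obtain ⟨h0, h1, h2', h3⟩ := (hParMem w).1 hwP
      have hc0 : c ((p:ℂ) * ((p:ℂ)⁻¹ * (w + ((m : ℂ) * ω₁ + (n : ℂ) * ω₂)))) 0
          = c w 0 + m := by rw [mul_inv_cancel_left₀ hpC, (hcl w m n).1]
      have hc1 : c ((p:ℂ) * ((p:ℂ)⁻¹ * (w + ((m : ℂ) * ω₁ + (n : ℂ) * ω₂)))) 1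
          = c w 1 + n := by rw [mul_inv_cancel_left₀ hpC, (hcl w m n).2]
      simp only [hc0, hc1, Int.floor_add_intCast, Int.fract_add_intCast,
        Int.floor_eq_zero_iff.mpr (Set.mem_Ico.mpr ⟨h0, h1⟩),
        Int.floor_eq_zero_iff.mpr (Set.mem_Ico.mpr ⟨h2', h3⟩),
        Int.fract_eq_self.mpr ⟨h0, h1⟩, Int.fract_eq_self.mpr ⟨h2', h3⟩,
        zero_add, hrepr w]
    · -- values agree
      intro z hz
      show z * (g z : ℂ) = (p : ℂ)⁻¹ * ((((Int.fract (c ((p:ℂ)*z) 0) : ℝ) : ℂ) * ω₁ +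
          ((Int.fract (c ((p:ℂ)*z) 1) : ℝ) : ℂ) * ω₂) +
          (((⌊c ((p:ℂ)*z) 0⌋ : ℤ) : ℂ) * ω₁ + ((⌊c ((p:ℂ)*z) 1⌋ : ℤ) : ℂ) * ω₂)) *
          ((e ((((Int.fract (c ((p:ℂ)*z) 0) : ℝ) : ℂ) * ω₁ +
            ((Int.fract (c ((p:ℂ)*z) 1) : ℝ) : ℂ) * ω₂)) : ℤ) : ℂ)
      rw [heρ ((p:ℂ)*z), ← hdecomp ((p:ℂ)*z), inv_mul_cancel_left₀ hpC]
  -- compute the double sum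
  have hVsum : ∑ v ∈ V, F v = (p : ℂ) * S := by
    rw [hV, Finset.sum_product]
    have inner : ∀ mn : ℤ × ℤ, ∑ w ∈ T, F (mn, w) = (p : ℂ)⁻¹ * S := by
      intro mn
      have hsplit : ∀ w ∈ T, F (mn, w) =
          (p : ℂ)⁻¹ * (w * (e w : ℂ)) +
            ((p : ℂ)⁻¹ * ((mn.1 : ℂ) * ω₁ + (mn.2 : ℂ) * ω₂)) * (e w : ℂ) := by
        intro w _
        rw [hF]
        ring
      rw [Finset.sum_congr rfl hsplit, Finset.sum_add_distrib, ← Finset.mul_sum,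
        ← Finset.mul_sum, hE0, mul_zero, add_zero, ← hSdef]
    rw [Finset.sum_congr rfl (fun mn _ => inner mn), Finset.sum_const,
      Finset.card_product, Int.card_Ico, sub_zero, nsmul_eq_mul]
    have hcast : ((p.toNat : ℂ)) = (p : ℂ) := by
      have h9 : ((p.toNat : ℤ)) = p := Int.toNat_of_nonneg (by omega)
      exact_mod_cast congrArg (fun k : ℤ => (k : ℂ)) h9
    push_cast
    rw [hcast]
    field_simp
  -- assemble everything
  set W : Finset ℂ := T ∪ U with hWdef
  have hLHS : ∑ᶠ z ∈ Par, z * (d z : ℂ) = ∑ z ∈ W, z * (d z : ℂ) := by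
    refine finsum_mem_eq_sum_of_subset _ ?_ ?_
    · rintro z ⟨hzP, hzs⟩
      simp only [Function.mem_support] at hzs
      rw [hWdef]
      rw [Finset.coe_union, Set.mem_union]
      simp only [Finset.mem_coe]
      by_cases h0 : e z = 0
      · refine Or.inr ((hUmem z).2 ⟨hzP, fun hg0 => ?_⟩)
        exact hzs (by rw [hd z, h0, hg0]; simp)
      · exact Or.inl ((hTmem z).2 ⟨hzP, h0⟩)
    · rw [hWdef]
      intro z hz
      rcases Finset.mem_union.1 hz with h | h
      · exact hTsub h
      · exact hUsub h
  have hWT : ∑ z ∈ W, z * (e z : ℂ) = S := by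
    rw [hSdef]
    refine (Finset.sum_subset (hWdef ▸ Finset.subset_union_left) ?_).symm
    intro z hzW hzT
    have hzP : z ∈ Par := by
      rcases Finset.mem_union.1 (hWdef ▸ hzW) with h | h
      · exact hTsub h
      · exact hUsub h
    have : e z = 0 := by
      by_contra h0
      exact hzT ((hTmem z).2 ⟨hzP, h0⟩)
    rw [this]
    simp
  have hWU : ∑ z ∈ W, z * (g z : ℂ) = ∑ z ∈ U, z * (g z : ℂ) := by
    refine (Finset.sum_subset (hWdef ▸ Finset.subset_union_right) ?_).symm
    intro z hzW hzU
    have hzP : z ∈ Par := by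
      rcases Finset.mem_union.1 (hWdef ▸ hzW) with h | h
      · exact hTsub h
      · exact hUsub h
    have : g z = 0 := by
      by_contra h0
      exact hzU ((hUmem z).2 ⟨hzP, h0⟩)
    rw [this]
    simp
  have hWsplit : ∑ z ∈ W, z * (d z : ℂ) =
      ∑ z ∈ W, z * (g z : ℂ) - ∑ z ∈ W, z * (e z : ℂ) := by
    rw [← Finset.sum_sub_distrib]
    refine Finset.sum_congr rfl fun z _ => ?_
    rw [hd z]
    push_cast
    ring
  rw [hLHS, hWsplit, hWU, hWT, hUV, hVsum, hRHSsum]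
  ring
end
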